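/- Let (α,γ) measure (Ã,C̃)_ψ̃ to (A,C)_ψ, and write γ(c̃) = c̃^[1] ⊗ c̃^[2]. For every right (A,C)_ψ-module M, the map ℓ̂^M : M⊗C̃ → M⊗C⊗C̃ defined by ℓ̂^M(m ⊗ c̃) = m₍₀₎ ⊗ m₍₁₎ ⊗ c̃ − m·c̃₍₁₎^[1] ⊗ c̃₍₁₎^[2] ⊗ c̃₍₂₎ is a morphism of right (Ã,C̃)_ψ̃-modules, where M⊗C̃ and M⊗C⊗C̃ carry the (Ã,C̃)_ψ̃-module structures induced by the measuring. -/
import Mathlib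


open TensorProduct LinearMap

/-- An entwining structure `(A, C)_ψ`. -/
structure Entwining (k A C : Type) [Field k] [Ring A] [Algebra k A]
    [AddCommGroup C] [Module k C] [Coalgebra k C] where
  ψ : C ⊗[k] A →ₗ[k] A ⊗[k] C
  entw_mul : ψ ∘ₗ (mul' k A).lTensor C =
    (mul' k A).rTensor C ∘ₗ (TensorProduct.assoc k A A C).symm.toLinearMap ∘ₗ
      ψ.lTensor A ∘ₗ (TensorProduct.assoc k A C A).toLinearMap ∘ₗ
      ψ.rTensor A ∘ₗ (TensorProduct.assoc k C A A).symm.toLinearMap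
  entw_unit : ∀ c : C, ψ (c ⊗ₜ[k] 1) = 1 ⊗ₜ[k] c
  entw_comul : (Coalgebra.comul (R := k) (A := C)).lTensor A ∘ₗ ψ =
    (TensorProduct.assoc k A C C).toLinearMap ∘ₗ ψ.rTensor C ∘ₗ
      (TensorProduct.assoc k C A C).symm.toLinearMap ∘ₗ ψ.lTensor C ∘ₗ
      (TensorProduct.assoc k C C A).toLinearMap ∘ₗ
      (Coalgebra.comul (R := k) (A := C)).rTensor A
  entw_counit : (TensorProduct.rid k A).toLinearMap ∘ₗ
      (Coalgebra.counit (R := k) (A := C)).lTensor A ∘ₗ ψ =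
    (TensorProduct.lid k A).toLinearMap ∘ₗ (Coalgebra.counit (R := k) (A := C)).rTensor A

/-- A right `C`-comodule structure on `V`. -/
structure RComod (k C V : Type) [Field k] [AddCommGroup C] [Module k C] [Coalgebra k C]
    [AddCommGroup V] [Module k V] where
  ρ : V →ₗ[k] V ⊗[k] C
  coassoc : (Coalgebra.comul (R := k) (A := C)).lTensor V ∘ₗ ρ =
    (TensorProduct.assoc k V C C).toLinearMap ∘ₗ ρ.rTensor C ∘ₗ ρ
  counit_id : (TensorProduct.rid k V).toLinearMap ∘ₗ
      (Coalgebra.counit (R := k) (A := C)).lTensor V ∘ₗ ρ = LinearMap.id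

/-- A left `C`-comodule structure on `V`. -/
structure LComod (k C V : Type) [Field k] [AddCommGroup C] [Module k C] [Coalgebra k C]
    [AddCommGroup V] [Module k V] where
  ρ : V →ₗ[k] C ⊗[k] V
  coassoc : (Coalgebra.comul (R := k) (A := C)).rTensor V ∘ₗ ρ =
    (TensorProduct.assoc k C C V).symm.toLinearMap ∘ₗ ρ.lTensor C ∘ₗ ρ
  counit_id : (TensorProduct.lid k V).toLinearMap ∘ₗ
      (Coalgebra.counit (R := k) (A := C)).rTensor V ∘ₗ ρ = LinearMap.id

/-- A right `A`-module structure (`k`-linear) on `M`. -/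
structure RAct (k A M : Type) [Field k] [Ring A] [Algebra k A]
    [AddCommGroup M] [Module k M] where
  act : M ⊗[k] A →ₗ[k] M
  act_one : ∀ m : M, act (m ⊗ₜ[k] 1) = m
  act_mul : ∀ (m : M) (a b : A),
    act (act (m ⊗ₜ[k] a) ⊗ₜ[k] b) = act (m ⊗ₜ[k] (a * b))

variable {k A C M : Type} [Field k] [Ring A] [Algebra k A]
  [AddCommGroup C] [Module k C] [Coalgebra k C] [AddCommGroup M] [Module k M]

/-- The compatibility condition making `M` an entwined `(A,C)_ψ`-module. -/
def EntwCompat (E : Entwining k A C) (α : RAct k A M) (ρM : RComod k C M) : Prop :=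
  ρM.ρ ∘ₗ α.act = α.act.rTensor C ∘ₗ (TensorProduct.assoc k M A C).symm.toLinearMap ∘ₗ
    E.ψ.lTensor M ∘ₗ (TensorProduct.assoc k M C A).toLinearMap ∘ₗ ρM.ρ.rTensor A

/-- The `A`-action on `M ⊗ C` induced by an entwining: `(m⊗c)·a = m·a_α ⊗ c^α`. -/
noncomputable def entwAct (E : Entwining k A C) (ν : M ⊗[k] A →ₗ[k] M) :
    (M ⊗[k] C) ⊗[k] A →ₗ[k] M ⊗[k] C :=
  ν.rTensor C ∘ₗ (TensorProduct.assoc k M A C).symm.toLinearMap ∘ₗ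
    E.ψ.lTensor M ∘ₗ (TensorProduct.assoc k M C A).toLinearMap

/-- The `C`-coaction `M ⊗ Δ` on `M ⊗ C`. -/
noncomputable def coactMC (k C M : Type) [Field k] [AddCommGroup C] [Module k C]
    [Coalgebra k C] [AddCommGroup M] [Module k M] :
    M ⊗[k] C →ₗ[k] (M ⊗[k] C) ⊗[k] C :=
  (TensorProduct.assoc k M C C).symm.toLinearMap ∘ₗ
    (Coalgebra.comul (R := k) (A := C)).lTensor M

/-- The coaction on `V ⊗ A` induced by an entwining: `v⊗a ↦ v₍₀₎ ⊗ ψ(v₍₁₎⊗a)`. -/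
noncomputable def entwCoact {V : Type} [AddCommGroup V] [Module k V]
    (E : Entwining k A C) (ρV : V →ₗ[k] V ⊗[k] C) :
    V ⊗[k] A →ₗ[k] (V ⊗[k] A) ⊗[k] C :=
  (TensorProduct.assoc k V A C).symm.toLinearMap ∘ₗ E.ψ.lTensor V ∘ₗ
    (TensorProduct.assoc k V C A).toLinearMap ∘ₗ ρV.rTensor A

/-- The action `V ⊗ μ` on `V ⊗ A`. -/
noncomputable def actVA (k : Type) (A V : Type) [Field k] [Ring A] [Algebra k A]
    [AddCommGroup V] [Module k V] :
    (V ⊗[k] A) ⊗[k] A →ₗ[k] V ⊗[k] A :=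
  (mul' k A).lTensor V ∘ₗ (TensorProduct.assoc k V A A).toLinearMap

/-- The canonical map `A ⊗ₖ A → A ⊗ C`, `a ⊗ a' ↦ a a'₍₀₎ ⊗ a'₍₁₎`. -/
noncomputable def canHat (ΔA : A →ₗ[k] A ⊗[k] C) : A ⊗[k] A →ₗ[k] A ⊗[k] C :=
  (mul' k A).rTensor C ∘ₗ (TensorProduct.assoc k A A C).symm.toLinearMap ∘ₗ ΔA.lTensor A

/-- The subspace of relations defining `A ⊗_B A` inside `A ⊗ₖ A`. -/
noncomputable def relSub (k : Type) [Field k] {A : Type} [Ring A] [Algebra k A]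
    (B : Set A) : Submodule k (A ⊗[k] A) :=
  Submodule.span k {x | ∃ a a' b : A, b ∈ B ∧ x = (a * b) ⊗ₜ[k] a' - a ⊗ₜ[k] (b * a')}

/-- Convolution product of `f g : C → A`. -/
noncomputable def conv (f g : C →ₗ[k] A) : C →ₗ[k] A :=
  mul' k A ∘ₗ TensorProduct.map f g ∘ₗ Coalgebra.comul (R := k)

/-- The convolution unit `η ∘ ε`. -/
noncomputable def convUnit (k C A : Type) [Field k] [Ring A] [Algebra k A]
    [AddCommGroup C] [Module k C] [Coalgebra k C] : C →ₗ[k] A :=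
  Algebra.linearMap k A ∘ₗ Coalgebra.counit (R := k)

/-- A measuring of the entwining structure `(A',C')_ψ'` to `(A,C)_ψ`
(`A' = Ã`, `C' = C̃` in the paper's notation). -/
structure Measuring (k A C A' C' : Type) [Field k] [Ring A] [Algebra k A]
    [AddCommGroup C] [Module k C] [Coalgebra k C]
    [Ring A'] [Algebra k A'] [AddCommGroup C'] [Module k C'] [Coalgebra k C']
    (E : Entwining k A C) (E' : Entwining k A' C') where
  α : C' ⊗[k] A' →ₗ[k] A
  γ : C' →ₗ[k] A ⊗[k] C
  meas_mul : α ∘ₗ (mul' k A').lTensor C' =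
    mul' k A ∘ₗ TensorProduct.map α α ∘ₗ
      (TensorProduct.assoc k C' A' (C' ⊗[k] A')).symm.toLinearMap ∘ₗ
      ((TensorProduct.assoc k A' C' A').toLinearMap ∘ₗ E'.ψ.rTensor A' ∘ₗ
        (TensorProduct.assoc k C' A' A').symm.toLinearMap).lTensor C' ∘ₗ
      (TensorProduct.assoc k C' C' (A' ⊗[k] A')).toLinearMap ∘ₗ
      (Coalgebra.comul (R := k) (A := C')).rTensor (A' ⊗[k] A')
  meas_unit : ∀ c : C', α (c ⊗ₜ[k] 1) = Coalgebra.counit (R := k) c • (1 : A)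
  meas_comul : (mul' k A).rTensor (C ⊗[k] C) ∘ₗ
      (TensorProduct.assoc k A A (C ⊗[k] C)).symm.toLinearMap ∘ₗ
      ((TensorProduct.assoc k A C C).toLinearMap ∘ₗ E.ψ.rTensor C ∘ₗ
        (TensorProduct.assoc k C A C).symm.toLinearMap).lTensor A ∘ₗ
      (TensorProduct.assoc k A C (A ⊗[k] C)).toLinearMap ∘ₗ
      TensorProduct.map γ γ ∘ₗ Coalgebra.comul (R := k) =
    (Coalgebra.comul (R := k) (A := C)).lTensor A ∘ₗ γ
  meas_counit : (TensorProduct.rid k A).toLinearMap ∘ₗ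
      (Coalgebra.counit (R := k) (A := C)).lTensor A ∘ₗ γ =
    Algebra.linearMap k A ∘ₗ Coalgebra.counit (R := k) (A := C')
  meas_compat : (mul' k A).rTensor C ∘ₗ
      (TensorProduct.assoc k A A C).symm.toLinearMap ∘ₗ
      TensorProduct.map α γ ∘ₗ
      (TensorProduct.assoc k C' A' C').symm.toLinearMap ∘ₗ E'.ψ.lTensor C' ∘ₗ
      (TensorProduct.assoc k C' C' A').toLinearMap ∘ₗ
      (Coalgebra.comul (R := k) (A := C')).rTensor A' =
    (mul' k A).rTensor C ∘ₗ
      (TensorProduct.assoc k A A C).symm.toLinearMap ∘ₗ E.ψ.lTensor A ∘ₗ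
      (TensorProduct.assoc k A C A).toLinearMap ∘ₗ
      TensorProduct.map γ α ∘ₗ
      (TensorProduct.assoc k C' C' A').toLinearMap ∘ₗ
      (Coalgebra.comul (R := k) (A := C')).rTensor A'

variable {A' C' : Type} [Ring A'] [Algebra k A'] [AddCommGroup C'] [Module k C']
  [Coalgebra k C']

/-- The `A'`-action on `M ⊗ C'` induced by a measuring:
`(m ⊗ c̃)·ã = m·α(c̃₍₁₎ ⊗ ã_β) ⊗ c̃₍₂₎^β`. -/
noncomputable def measAct {E : Entwining k A C} {E' : Entwining k A' C'}
    (m : Measuring k A C A' C' E E') (ν : M ⊗[k] A →ₗ[k] M) :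
    (M ⊗[k] C') ⊗[k] A' →ₗ[k] M ⊗[k] C' :=
  ν.rTensor C' ∘ₗ (TensorProduct.assoc k M A C').symm.toLinearMap ∘ₗ
    (m.α.rTensor C' ∘ₗ (TensorProduct.assoc k C' A' C').symm.toLinearMap ∘ₗ
      E'.ψ.lTensor C' ∘ₗ (TensorProduct.assoc k C' C' A').toLinearMap ∘ₗ
      (Coalgebra.comul (R := k) (A := C')).rTensor A').lTensor M ∘ₗ
    (TensorProduct.assoc k M C' A').toLinearMap


namespace S11


section Leaves
variable {R : Type} [CommSemiring R]
variable {X X' Y Y' Z Z' W U V : Type}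
  [AddCommMonoid X] [AddCommMonoid X'] [AddCommMonoid Y] [AddCommMonoid Y']
  [AddCommMonoid Z] [AddCommMonoid Z'] [AddCommMonoid W] [AddCommMonoid U] [AddCommMonoid V]
  [Module R X] [Module R X'] [Module R Y] [Module R Y'] [Module R Z] [Module R Z']
  [Module R W] [Module R U] [Module R V]

theorem lT_lT (f : Y →ₗ[R] Z) (g : X →ₗ[R] Y) (x : W ⊗[R] X) :
    f.lTensor W (g.lTensor W x) = (f ∘ₗ g).lTensor W x := by
  rw [lTensor_comp]; rfl

theorem rT_rT (f : Y →ₗ[R] Z) (g : X →ₗ[R] Y) (x : X ⊗[R] W) :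
    f.rTensor W (g.rTensor W x) = (f ∘ₗ g).rTensor W x := by
  rw [rTensor_comp]; rfl

theorem comm_rl (f : X →ₗ[R] X') (g : Y →ₗ[R] Y') (x : X ⊗[R] Y) :
    f.rTensor Y' (g.lTensor X x) = g.lTensor X' (f.rTensor Y x) := by
  rw [← comp_apply, ← comp_apply, rTensor_comp_lTensor, lTensor_comp_rTensor]

theorem nat_r_map (f : X →ₗ[R] X') :
    (TensorProduct.assoc R X' Y Z).toLinearMap ∘ₗ (f.rTensor Y).rTensor Z
      = f.rTensor (Y ⊗[R] Z) ∘ₗ (TensorProduct.assoc R X Y Z).toLinearMap :=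
  TensorProduct.ext_threefold fun a b c => by simp

theorem nat_r (f : X →ₗ[R] X') (x : (X ⊗[R] Y) ⊗[R] Z) :
    (TensorProduct.assoc R X' Y Z).toLinearMap ((f.rTensor Y).rTensor Z x)
      = f.rTensor (Y ⊗[R] Z) ((TensorProduct.assoc R X Y Z).toLinearMap x) :=
  LinearMap.congr_fun (nat_r_map f) x

theorem nat_m_map (g : Y →ₗ[R] Y') :
    (TensorProduct.assoc R X Y' Z).toLinearMap ∘ₗ (g.lTensor X).rTensor Z
      = (g.rTensor Z).lTensor X ∘ₗ (TensorProduct.assoc R X Y Z).toLinearMap :=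
  TensorProduct.ext_threefold fun a b c => by simp

theorem nat_m (g : Y →ₗ[R] Y') (x : (X ⊗[R] Y) ⊗[R] Z) :
    (TensorProduct.assoc R X Y' Z).toLinearMap ((g.lTensor X).rTensor Z x)
      = (g.rTensor Z).lTensor X ((TensorProduct.assoc R X Y Z).toLinearMap x) :=
  LinearMap.congr_fun (nat_m_map g) x

theorem nat_l_map (h : Z →ₗ[R] Z') :
    (TensorProduct.assoc R X Y Z').toLinearMap ∘ₗ h.lTensor (X ⊗[R] Y)
      = (h.lTensor Y).lTensor X ∘ₗ (TensorProduct.assoc R X Y Z).toLinearMap :=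
  TensorProduct.ext_threefold fun a b c => by simp

theorem nat_l (h : Z →ₗ[R] Z') (x : (X ⊗[R] Y) ⊗[R] Z) :
    (TensorProduct.assoc R X Y Z').toLinearMap (h.lTensor (X ⊗[R] Y) x)
      = (h.lTensor Y).lTensor X ((TensorProduct.assoc R X Y Z).toLinearMap x) :=
  LinearMap.congr_fun (nat_l_map h) x

theorem nat_r'_map (f : X →ₗ[R] X') :
    (TensorProduct.assoc R X' Y Z).symm.toLinearMap ∘ₗ f.rTensor (Y ⊗[R] Z)
      = (f.rTensor Y).rTensor Z ∘ₗ (TensorProduct.assoc R X Y Z).symm.toLinearMap :=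
  TensorProduct.ext' fun a t => by
    induction t using TensorProduct.induction_on with
    | zero => simp
    | tmul y z => simp
    | add u v hu hv => simp only [tmul_add, map_add, hu, hv]

theorem nat_r' (f : X →ₗ[R] X') (x : X ⊗[R] (Y ⊗[R] Z)) :
    (TensorProduct.assoc R X' Y Z).symm.toLinearMap (f.rTensor (Y ⊗[R] Z) x)
      = (f.rTensor Y).rTensor Z ((TensorProduct.assoc R X Y Z).symm.toLinearMap x) :=
  LinearMap.congr_fun (nat_r'_map f) x

theorem nat_m'_map (g : Y →ₗ[R] Y') :
    (TensorProduct.assoc R X Y' Z).symm.toLinearMap ∘ₗ (g.rTensor Z).lTensor X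
      = (g.lTensor X).rTensor Z ∘ₗ (TensorProduct.assoc R X Y Z).symm.toLinearMap :=
  TensorProduct.ext' fun a t => by
    induction t using TensorProduct.induction_on with
    | zero => simp
    | tmul y z => simp
    | add u v hu hv => simp only [tmul_add, map_add, hu, hv]

theorem nat_m' (g : Y →ₗ[R] Y') (x : X ⊗[R] (Y ⊗[R] Z)) :
    (TensorProduct.assoc R X Y' Z).symm.toLinearMap ((g.rTensor Z).lTensor X x)
      = (g.lTensor X).rTensor Z ((TensorProduct.assoc R X Y Z).symm.toLinearMap x) :=
  LinearMap.congr_fun (nat_m'_map g) x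

theorem nat_l'_map (h : Z →ₗ[R] Z') :
    (TensorProduct.assoc R X Y Z').symm.toLinearMap ∘ₗ (h.lTensor Y).lTensor X
      = h.lTensor (X ⊗[R] Y) ∘ₗ (TensorProduct.assoc R X Y Z).symm.toLinearMap :=
  TensorProduct.ext' fun a t => by
    induction t using TensorProduct.induction_on with
    | zero => simp
    | tmul y z => simp
    | add u v hu hv => simp only [tmul_add, map_add, hu, hv]

theorem nat_l' (h : Z →ₗ[R] Z') (x : X ⊗[R] (Y ⊗[R] Z)) :
    (TensorProduct.assoc R X Y Z').symm.toLinearMap ((h.lTensor Y).lTensor X x)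
      = h.lTensor (X ⊗[R] Y) ((TensorProduct.assoc R X Y Z).symm.toLinearMap x) :=
  LinearMap.congr_fun (nat_l'_map h) x

theorem assoc_cancel (x : (X ⊗[R] Y) ⊗[R] Z) :
    (TensorProduct.assoc R X Y Z).symm.toLinearMap
      ((TensorProduct.assoc R X Y Z).toLinearMap x) = x := by simp

theorem assoc_cancel' (x : X ⊗[R] (Y ⊗[R] Z)) :
    (TensorProduct.assoc R X Y Z).toLinearMap
      ((TensorProduct.assoc R X Y Z).symm.toLinearMap x) = x := by simp

theorem pent1_map :
    (TensorProduct.assoc R (X ⊗[R] Y) Z W).symm.toLinearMap ∘ₗ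
        (TensorProduct.assoc R X Y (Z ⊗[R] W)).symm.toLinearMap
      = ((TensorProduct.assoc R X Y Z).symm.toLinearMap).rTensor W ∘ₗ
          (TensorProduct.assoc R X (Y ⊗[R] Z) W).symm.toLinearMap ∘ₗ
          ((TensorProduct.assoc R Y Z W).symm.toLinearMap).lTensor X :=
  TensorProduct.ext' fun a t => by
    induction t using TensorProduct.induction_on with
    | zero => simp
    | tmul y u =>
      induction u using TensorProduct.induction_on with
      | zero => simp
      | tmul z w => simp
      | add s t hs ht => simp only [tmul_add, map_add, hs, ht]
    | add u v hu hv => simp only [tmul_add, map_add, hu, hv]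

theorem pent1 (x : X ⊗[R] (Y ⊗[R] (Z ⊗[R] W))) :
    (TensorProduct.assoc R (X ⊗[R] Y) Z W).symm.toLinearMap
        ((TensorProduct.assoc R X Y (Z ⊗[R] W)).symm.toLinearMap x)
      = ((TensorProduct.assoc R X Y Z).symm.toLinearMap).rTensor W
          ((TensorProduct.assoc R X (Y ⊗[R] Z) W).symm.toLinearMap
            (((TensorProduct.assoc R Y Z W).symm.toLinearMap).lTensor X x)) :=
  LinearMap.congr_fun pent1_map x

end Leaves


section Leaves2
variable {R : Type} [CommSemiring R]
variable {X X' Y W U V : Type}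
  [AddCommMonoid X] [AddCommMonoid X'] [AddCommMonoid Y]
  [AddCommMonoid W] [AddCommMonoid U] [AddCommMonoid V]
  [Module R X] [Module R X'] [Module R Y] [Module R W] [Module R U] [Module R V]

theorem sig_push_map (s : U ⊗[R] V →ₗ[R] Y ⊗[R] U) (f : X →ₗ[R] X') :
    (TensorProduct.assoc R X' Y U).symm.toLinearMap ∘ₗ s.lTensor X' ∘ₗ
        (TensorProduct.assoc R X' U V).toLinearMap ∘ₗ (f.rTensor U).rTensor V
      = (f.rTensor Y).rTensor U ∘ₗ (TensorProduct.assoc R X Y U).symm.toLinearMap ∘ₗ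
          s.lTensor X ∘ₗ (TensorProduct.assoc R X U V).toLinearMap :=
  TensorProduct.ext_threefold fun x u v => by
    simp only [comp_apply, rTensor_tmul, LinearEquiv.coe_coe, assoc_tmul, lTensor_tmul]
    generalize s (u ⊗ₜ[R] v) = t
    induction t using TensorProduct.induction_on with
    | zero => simp
    | tmul y u' => simp
    | add a b ha hb => simp only [tmul_add, map_add, ha, hb]

theorem sig_push (s : U ⊗[R] V →ₗ[R] Y ⊗[R] U) (f : X →ₗ[R] X')
    (x : (X ⊗[R] U) ⊗[R] V) :
    (TensorProduct.assoc R X' Y U).symm.toLinearMap (s.lTensor X'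
        ((TensorProduct.assoc R X' U V).toLinearMap ((f.rTensor U).rTensor V x)))
      = (f.rTensor Y).rTensor U ((TensorProduct.assoc R X Y U).symm.toLinearMap
          (s.lTensor X ((TensorProduct.assoc R X U V).toLinearMap x))) :=
  LinearMap.congr_fun (sig_push_map s f) x

theorem theta_push_map (s : U ⊗[R] V →ₗ[R] Y ⊗[R] U) :
    (TensorProduct.assoc R (X ⊗[R] W) Y U).symm.toLinearMap ∘ₗ s.lTensor (X ⊗[R] W) ∘ₗ
        (TensorProduct.assoc R (X ⊗[R] W) U V).toLinearMap ∘ₗ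
        ((TensorProduct.assoc R X W U).symm.toLinearMap).rTensor V
      = ((TensorProduct.assoc R X W Y).symm.toLinearMap).rTensor U ∘ₗ
          (TensorProduct.assoc R X (W ⊗[R] Y) U).symm.toLinearMap ∘ₗ
          ((TensorProduct.assoc R W Y U).symm.toLinearMap).lTensor X ∘ₗ
          (s.lTensor W).lTensor X ∘ₗ
          ((TensorProduct.assoc R W U V).toLinearMap).lTensor X ∘ₗ
          (TensorProduct.assoc R X (W ⊗[R] U) V).toLinearMap :=
  TensorProduct.ext_threefold fun x t v => by
    induction t using TensorProduct.induction_on with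
    | zero => simp
    | tmul w u =>
      simp only [comp_apply, rTensor_tmul, LinearEquiv.coe_coe, assoc_tmul,
        assoc_symm_tmul, lTensor_tmul]
      generalize s (u ⊗ₜ[R] v) = t
      induction t using TensorProduct.induction_on with
      | zero => simp
      | tmul y u' => simp
      | add a b ha hb => simp only [tmul_add, map_add, ha, hb]
    | add a b ha hb => simp only [tmul_add, add_tmul, map_add] at ha hb ⊢; rw [ha, hb]

theorem theta_push (s : U ⊗[R] V →ₗ[R] Y ⊗[R] U) (x : (X ⊗[R] (W ⊗[R] U)) ⊗[R] V) :
    (TensorProduct.assoc R (X ⊗[R] W) Y U).symm.toLinearMap (s.lTensor (X ⊗[R] W)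
        ((TensorProduct.assoc R (X ⊗[R] W) U V).toLinearMap
          (((TensorProduct.assoc R X W U).symm.toLinearMap).rTensor V x)))
      = ((TensorProduct.assoc R X W Y).symm.toLinearMap).rTensor U
          ((TensorProduct.assoc R X (W ⊗[R] Y) U).symm.toLinearMap
            (((TensorProduct.assoc R W Y U).symm.toLinearMap).lTensor X
              ((s.lTensor W).lTensor X
                (((TensorProduct.assoc R W U V).toLinearMap).lTensor X
                  ((TensorProduct.assoc R X (W ⊗[R] U) V).toLinearMap x))))) :=
  LinearMap.congr_fun (theta_push_map s) x

theorem psi1_map (g : U ⊗[R] V →ₗ[R] V ⊗[R] U) :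
    (TensorProduct.assoc R U (U ⊗[R] V) U).symm.toLinearMap ∘ₗ
        ((TensorProduct.assoc R U V U).symm.toLinearMap).lTensor U ∘ₗ
        (g.lTensor U).lTensor U ∘ₗ
        ((TensorProduct.assoc R U U V).toLinearMap).lTensor U ∘ₗ
        (TensorProduct.assoc R U (U ⊗[R] U) V).toLinearMap ∘ₗ
        ((TensorProduct.assoc R U U U).toLinearMap).rTensor V
      = ((TensorProduct.assoc R U U V).toLinearMap).rTensor U ∘ₗ
          (TensorProduct.assoc R (U ⊗[R] U) V U).symm.toLinearMap ∘ₗ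
          g.lTensor (U ⊗[R] U) ∘ₗ
          (TensorProduct.assoc R (U ⊗[R] U) U V).toLinearMap :=
  TensorProduct.ext_threefold fun t c3 a => by
    induction t using TensorProduct.induction_on with
    | zero => simp
    | tmul c1 c2 =>
      simp only [comp_apply, rTensor_tmul, LinearEquiv.coe_coe, assoc_tmul,
        assoc_symm_tmul, lTensor_tmul]
      generalize g (c3 ⊗ₜ[R] a) = t
      induction t using TensorProduct.induction_on with
      | zero => simp
      | tmul b c => simp
      | add a b ha hb => simp only [tmul_add, map_add, ha, hb]
    | add a b ha hb => simp only [tmul_add, add_tmul, map_add] at ha hb ⊢; rw [ha, hb]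

theorem psi1 (g : U ⊗[R] V →ₗ[R] V ⊗[R] U) (x : ((U ⊗[R] U) ⊗[R] U) ⊗[R] V) :
    (TensorProduct.assoc R U (U ⊗[R] V) U).symm.toLinearMap
        (((TensorProduct.assoc R U V U).symm.toLinearMap).lTensor U
          ((g.lTensor U).lTensor U
            (((TensorProduct.assoc R U U V).toLinearMap).lTensor U
              ((TensorProduct.assoc R U (U ⊗[R] U) V).toLinearMap
                (((TensorProduct.assoc R U U U).toLinearMap).rTensor V x)))))
      = ((TensorProduct.assoc R U U V).toLinearMap).rTensor U
          ((TensorProduct.assoc R (U ⊗[R] U) V U).symm.toLinearMap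
            (g.lTensor (U ⊗[R] U)
              ((TensorProduct.assoc R (U ⊗[R] U) U V).toLinearMap x))) :=
  LinearMap.congr_fun (psi1_map g) x

theorem psi2_map (g : U ⊗[R] V →ₗ[R] V ⊗[R] U) :
    ((TensorProduct.assoc R U V U).symm.toLinearMap).rTensor U ∘ₗ
        (g.lTensor U).rTensor U ∘ₗ
        ((TensorProduct.assoc R U U V).toLinearMap).rTensor U ∘ₗ
        (TensorProduct.assoc R (U ⊗[R] U) V U).symm.toLinearMap ∘ₗ
        g.lTensor (U ⊗[R] U) ∘ₗ
        (TensorProduct.assoc R (U ⊗[R] U) U V).toLinearMap ∘ₗ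
        ((TensorProduct.assoc R U U U).symm.toLinearMap).rTensor V
      = (TensorProduct.assoc R (U ⊗[R] V) U U).symm.toLinearMap ∘ₗ
          (TensorProduct.assoc R U V (U ⊗[R] U)).symm.toLinearMap ∘ₗ
          ((TensorProduct.assoc R V U U).toLinearMap).lTensor U ∘ₗ
          (g.rTensor U).lTensor U ∘ₗ
          ((TensorProduct.assoc R U V U).symm.toLinearMap).lTensor U ∘ₗ
          (g.lTensor U).lTensor U ∘ₗ
          ((TensorProduct.assoc R U U V).toLinearMap).lTensor U ∘ₗ
          (TensorProduct.assoc R U (U ⊗[R] U) V).toLinearMap :=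
  TensorProduct.ext_threefold fun c1 t a => by
    induction t using TensorProduct.induction_on with
    | zero => simp
    | tmul c2 c3 =>
      simp only [comp_apply, rTensor_tmul, LinearEquiv.coe_coe, assoc_tmul,
        assoc_symm_tmul, lTensor_tmul]
      generalize g (c3 ⊗ₜ[R] a) = t1
      induction t1 using TensorProduct.induction_on with
      | zero => simp
      | tmul b c3' =>
        simp only [LinearEquiv.coe_coe, assoc_symm_tmul, rTensor_tmul, assoc_tmul, lTensor_tmul]
        generalize g (c2 ⊗ₜ[R] b) = t2
        induction t2 using TensorProduct.induction_on with
        | zero => simp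
        | tmul b' c2' => simp
        | add a b ha hb => simp only [tmul_add, add_tmul, map_add, ha, hb]
      | add a b ha hb => simp only [tmul_add, add_tmul, map_add, ha, hb]
    | add a b ha hb => simp only [tmul_add, add_tmul, map_add] at ha hb ⊢; rw [ha, hb]

theorem psi2 (g : U ⊗[R] V →ₗ[R] V ⊗[R] U) (x : (U ⊗[R] (U ⊗[R] U)) ⊗[R] V) :
    ((TensorProduct.assoc R U V U).symm.toLinearMap).rTensor U
        ((g.lTensor U).rTensor U
          (((TensorProduct.assoc R U U V).toLinearMap).rTensor U
            ((TensorProduct.assoc R (U ⊗[R] U) V U).symm.toLinearMap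
              (g.lTensor (U ⊗[R] U)
                ((TensorProduct.assoc R (U ⊗[R] U) U V).toLinearMap
                  (((TensorProduct.assoc R U U U).symm.toLinearMap).rTensor V x))))))
      = (TensorProduct.assoc R (U ⊗[R] V) U U).symm.toLinearMap
          ((TensorProduct.assoc R U V (U ⊗[R] U)).symm.toLinearMap
            (((TensorProduct.assoc R V U U).toLinearMap).lTensor U
              ((g.rTensor U).lTensor U
                (((TensorProduct.assoc R U V U).symm.toLinearMap).lTensor U
                  ((g.lTensor U).lTensor U
                    (((TensorProduct.assoc R U U V).toLinearMap).lTensor U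
                      ((TensorProduct.assoc R U (U ⊗[R] U) V).toLinearMap x))))))) :=
  LinearMap.congr_fun (psi2_map g) x

end Leaves2
end S11

set_option maxHeartbeats 2000000 in
/-- for a measuring `(α,γ)` of `(Ã,C̃)_ψ̃` to `(A,C)_ψ` and a right
`(A,C)_ψ`-module `M`, the map
`ℓ̂^M(m ⊗ c̃) = m₍₀₎ ⊗ m₍₁₎ ⊗ c̃ − m·c̃₍₁₎^[1] ⊗ c̃₍₁₎^[2] ⊗ c̃₍₂₎`
is a morphism of right `(Ã,C̃)_ψ̃`-modules `M ⊗ C̃ → M ⊗ C ⊗ C̃`, i.e. it is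
`Ã`-linear and `C̃`-colinear for the induced structures. -/
theorem statement11 {k A C A' C' M : Type} [Field k] [Ring A] [Algebra k A]
    [AddCommGroup C] [Module k C] [Coalgebra k C]
    [Ring A'] [Algebra k A'] [AddCommGroup C'] [Module k C'] [Coalgebra k C']
    [AddCommGroup M] [Module k M]
    {E : Entwining k A C} {E' : Entwining k A' C'}
    (m : Measuring k A C A' C' E E')
    (β : RAct k A M) (ρM : RComod k C M) (hM : EntwCompat E β ρM) :
    -- `ℓ̂^M : M ⊗ C̃ → (M ⊗ C) ⊗ C̃`
    let ℓ : M ⊗[k] C' →ₗ[k] (M ⊗[k] C) ⊗[k] C' :=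
      ρM.ρ.rTensor C' -
        ((β.act.rTensor C).rTensor C' ∘ₗ
          ((TensorProduct.assoc k M A C).symm.toLinearMap).rTensor C' ∘ₗ
          (TensorProduct.assoc k M (A ⊗[k] C) C').symm.toLinearMap ∘ₗ
          (m.γ.rTensor C').lTensor M ∘ₗ
          (Coalgebra.comul (R := k) (A := C')).lTensor M)
    -- `ℓ̂^M` is right `Ã`-linear:
    (measAct m (entwAct E β.act) ∘ₗ ℓ.rTensor A' = ℓ ∘ₗ measAct m β.act) ∧
    -- `ℓ̂^M` is right `C̃`-colinear:
    (coactMC k C' (M ⊗[k] C) ∘ₗ ℓ = ℓ.rTensor C' ∘ₗ coactMC k C' M) := by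
  intro ℓ
  have hℓ : ℓ = ρM.ρ.rTensor C' -
      ((β.act.rTensor C).rTensor C' ∘ₗ
        ((TensorProduct.assoc k M A C).symm.toLinearMap).rTensor C' ∘ₗ
        (TensorProduct.assoc k M (A ⊗[k] C) C').symm.toLinearMap ∘ₗ
        (m.γ.rTensor C').lTensor M ∘ₗ
        (Coalgebra.comul (R := k) (A := C')).lTensor M) := rfl
  set ch : C' ⊗[k] A' →ₗ[k] (C' ⊗[k] A') ⊗[k] C' :=
    (TensorProduct.assoc k C' A' C').symm.toLinearMap ∘ₗ E'.ψ.lTensor C' ∘ₗ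
      (TensorProduct.assoc k C' C' A').toLinearMap ∘ₗ (Coalgebra.comul (R := k) (A := C')).rTensor A' with hch
  set sg : C' ⊗[k] A' →ₗ[k] A ⊗[k] C' := m.α.rTensor C' ∘ₗ ch with hsg
  set DD : C' →ₗ[k] (A ⊗[k] C) ⊗[k] C' := m.γ.rTensor C' ∘ₗ (Coalgebra.comul (R := k) (A := C')) with hDD
  set L2 : M ⊗[k] C' →ₗ[k] (M ⊗[k] C) ⊗[k] C' :=
    (β.act.rTensor C).rTensor C' ∘ₗ
      ((TensorProduct.assoc k M A C).symm.toLinearMap).rTensor C' ∘ₗ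
      (TensorProduct.assoc k M (A ⊗[k] C) C').symm.toLinearMap ∘ₗ
      (m.γ.rTensor C').lTensor M ∘ₗ (Coalgebra.comul (R := k) (A := C')).lTensor M with hL2
  have hQ : measAct m β.act = β.act.rTensor C' ∘ₗ
      (TensorProduct.assoc k M A C').symm.toLinearMap ∘ₗ sg.lTensor M ∘ₗ
      (TensorProduct.assoc k M C' A').toLinearMap := by
    rw [hsg, hch]; rfl
  have hP : measAct m (entwAct E β.act) = (entwAct E β.act).rTensor C' ∘ₗ
      (TensorProduct.assoc k (M ⊗[k] C) A C').symm.toLinearMap ∘ₗ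
      sg.lTensor (M ⊗[k] C) ∘ₗ
      (TensorProduct.assoc k (M ⊗[k] C) C' A').toLinearMap := by
    rw [hsg, hch]; rfl
  have hℓ' : ℓ = ρM.ρ.rTensor C' - L2 := hℓ
  have hM2 : ρM.ρ ∘ₗ β.act = entwAct E β.act ∘ₗ ρM.ρ.rTensor A := by
    have h := hM; unfold EntwCompat at h
    rw [h]; unfold entwAct; simp only [LinearMap.comp_assoc]
  have claimT1 : measAct m (entwAct E β.act) ∘ₗ (ρM.ρ.rTensor C').rTensor A'
      = ρM.ρ.rTensor C' ∘ₗ measAct m β.act := by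
    rw [hP, hQ]
    refine LinearMap.ext fun x => ?_
    simp only [comp_apply]
    rw [S11.sig_push sg ρM.ρ x,
      S11.rT_rT (entwAct E β.act) (ρM.ρ.rTensor A), S11.rT_rT ρM.ρ β.act, ← hM2]
  set m2 : A ⊗[k] (A ⊗[k] C) →ₗ[k] A ⊗[k] C :=
    (mul' k A).rTensor C ∘ₗ (TensorProduct.assoc k A A C).symm.toLinearMap with hm2
  set m2' : (A ⊗[k] C) ⊗[k] A →ₗ[k] A ⊗[k] C := entwAct (M := A) E (mul' k A) with hm2'
  set fc : M ⊗[k] (A ⊗[k] C) →ₗ[k] M ⊗[k] C :=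
    β.act.rTensor C ∘ₗ (TensorProduct.assoc k M A C).symm.toLinearMap with hfc
  have hT : ((entwAct E β.act ∘ₗ (β.act.rTensor C).rTensor A) ∘ₗ
        ((TensorProduct.assoc k M A C).symm.toLinearMap).rTensor A) ∘ₗ
        (TensorProduct.assoc k M (A ⊗[k] C) A).symm.toLinearMap
      = fc ∘ₗ m2'.lTensor M := by
    rw [hfc, hm2']
    refine TensorProduct.ext' fun mm t => ?_
    induction t using TensorProduct.induction_on with
    | zero => simp
    | tmul u b =>
      induction u using TensorProduct.induction_on with
      | zero => simp
      | tmul a c =>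
        simp only [entwAct, comp_apply, LinearEquiv.coe_coe, assoc_symm_tmul, assoc_tmul,
          rTensor_tmul, lTensor_tmul]
        generalize E.ψ (c ⊗ₜ[k] b) = t
        induction t using TensorProduct.induction_on with
        | zero => simp
        | tmul a' c' => simp [mul'_apply, β.act_mul]
        | add p q hp hq => simp only [tmul_add, map_add, hp, hq]
      | add p q hp hq => simp only [add_tmul, tmul_add, map_add] at hp hq ⊢; rw [hp, hq]
    | add p q hp hq => simp only [tmul_add, map_add] at hp hq ⊢; rw [hp, hq]
  have hT2 : (((β.act.rTensor C ∘ₗ (TensorProduct.assoc k M A C).symm.toLinearMap) ∘ₗ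
        β.act.rTensor (A ⊗[k] C)) ∘ₗ
        (TensorProduct.assoc k M A (A ⊗[k] C)).symm.toLinearMap)
      = fc ∘ₗ m2.lTensor M := by
    rw [hfc, hm2]
    refine TensorProduct.ext' fun mm t => ?_
    induction t using TensorProduct.induction_on with
    | zero => simp
    | tmul a u =>
      induction u using TensorProduct.induction_on with
      | zero => simp
      | tmul b c => simp [mul'_apply, β.act_mul]
      | add p q hp hq => simp only [add_tmul, tmul_add, map_add] at hp hq ⊢; rw [hp, hq]
    | add p q hp hq => simp only [tmul_add, map_add] at hp hq ⊢; rw [hp, hq]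
  have hmap : (m2 ∘ₗ m.α.rTensor (A ⊗[k] C)) ∘ₗ m.γ.lTensor (C' ⊗[k] A')
      = m2 ∘ₗ TensorProduct.map m.α m.γ := by
    rw [LinearMap.comp_assoc, LinearMap.rTensor_comp_lTensor]
  have hcompat : ((((m2' ∘ₗ m.γ.rTensor A) ∘ₗ m.α.lTensor C') ∘ₗ
        (TensorProduct.assoc k C' C' A').toLinearMap) ∘ₗ
        (Coalgebra.comul (R := k) (A := C')).rTensor A')
      = (m2 ∘ₗ TensorProduct.map m.α m.γ) ∘ₗ ch := by
    have h := m.meas_compat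
    rw [← LinearMap.rTensor_comp_lTensor (f := m.γ) (g := m.α),
      ← LinearMap.rTensor_comp_lTensor (f := m.α) (g := m.γ)] at h
    rw [← LinearMap.rTensor_comp_lTensor (f := m.α) (g := m.γ), hm2, hm2', hch]
    unfold entwAct
    simp only [LinearMap.comp_assoc] at h ⊢
    exact h.symm
  have hXi : ∀ z : C' ⊗[k] A',
      (TensorProduct.assoc k C' (C' ⊗[k] A') C').symm.toLinearMap
        (ch.lTensor C' ((TensorProduct.assoc k C' C' A').toLinearMap
          (((Coalgebra.comul (R := k) (A := C')).rTensor A') z)))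
      = ((TensorProduct.assoc k C' C' A').toLinearMap).rTensor C'
          (((Coalgebra.comul (R := k) (A := C')).rTensor A').rTensor C' (ch z)) := by
    intro z
    rw [hch]
    simp only [lTensor_comp, comp_apply]
    conv_lhs => rw [← S11.nat_m (Coalgebra.comul (R := k) (A := C')),
      S11.rT_rT ((Coalgebra.comul (R := k) (A := C')).lTensor C')
        (Coalgebra.comul (R := k) (A := C')),
      show (Coalgebra.comul (R := k) (A := C')).lTensor C' ∘ₗ
          (Coalgebra.comul (R := k) (A := C'))
        = (TensorProduct.assoc k C' C' C').toLinearMap ∘ₗ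
          ((Coalgebra.comul (R := k) (A := C')).rTensor C' ∘ₗ
            (Coalgebra.comul (R := k) (A := C'))) from Coalgebra.coassoc.symm,
      ← S11.rT_rT, ← S11.rT_rT, S11.psi1]
    conv_rhs => rw [← S11.nat_r' (Coalgebra.comul (R := k) (A := C')),
      S11.comm_rl (Coalgebra.comul (R := k) (A := C')) E'.ψ,
      ← S11.nat_r (Coalgebra.comul (R := k) (A := C'))]
  have hCC : ∀ z : C' ⊗[k] A',
      ch.rTensor C' (ch z)
      = (TensorProduct.assoc k (C' ⊗[k] A') C' C').symm.toLinearMap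
          ((Coalgebra.comul (R := k) (A := C')).lTensor (C' ⊗[k] A') (ch z)) := by
    intro z
    rw [hch]
    simp only [comp_apply]
    conv_lhs => rw [← S11.rT_rT, ← S11.rT_rT, ← S11.rT_rT,
      ← S11.nat_r' (Coalgebra.comul (R := k) (A := C')),
      S11.comm_rl (Coalgebra.comul (R := k) (A := C')) E'.ψ,
      ← S11.nat_r (Coalgebra.comul (R := k) (A := C')),
      S11.rT_rT ((Coalgebra.comul (R := k) (A := C')).rTensor C')
        (Coalgebra.comul (R := k) (A := C')),
      show (Coalgebra.comul (R := k) (A := C')).rTensor C' ∘ₗ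
          (Coalgebra.comul (R := k) (A := C'))
        = (TensorProduct.assoc k C' C' C').symm.toLinearMap ∘ₗ
          ((Coalgebra.comul (R := k) (A := C')).lTensor C' ∘ₗ
            (Coalgebra.comul (R := k) (A := C'))) from Coalgebra.coassoc_symm.symm,
      ← S11.rT_rT, ← S11.rT_rT, S11.psi2]
    conv_rhs => rw [← S11.nat_l' (Coalgebra.comul (R := k) (A := C')), S11.lT_lT,
      E'.entw_comul]
    simp only [lTensor_comp, comp_apply]
    conv_rhs => rw [← S11.nat_m (Coalgebra.comul (R := k) (A := C'))]
  have hK : (((((m2'.rTensor C' ∘ₗ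
          (TensorProduct.assoc k (A ⊗[k] C) A C').symm.toLinearMap) ∘ₗ
          sg.lTensor (A ⊗[k] C)) ∘ₗ
          (TensorProduct.assoc k (A ⊗[k] C) C' A').toLinearMap) ∘ₗ
          (m.γ.rTensor C').rTensor A') ∘ₗ
          (Coalgebra.comul (R := k) (A := C')).rTensor A')
      = ((m2.rTensor C' ∘ₗ
          (TensorProduct.assoc k A (A ⊗[k] C) C').symm.toLinearMap) ∘ₗ
          DD.lTensor A) ∘ₗ sg := by
    refine LinearMap.ext fun y => ?_
    simp only [comp_apply]
    conv_lhs => rw [S11.nat_r m.γ, ← S11.comm_rl m.γ sg, S11.nat_r' m.γ, hsg,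
      ← S11.lT_lT (m.α.rTensor C') ch, S11.nat_m' m.α,
      S11.rT_rT m2' (m.γ.rTensor A),
      S11.rT_rT (m2' ∘ₗ m.γ.rTensor A) (m.α.lTensor C'), hXi,
      S11.rT_rT ((m2' ∘ₗ m.γ.rTensor A) ∘ₗ m.α.lTensor C')
        ((TensorProduct.assoc k C' C' A').toLinearMap),
      S11.rT_rT (((m2' ∘ₗ m.γ.rTensor A) ∘ₗ m.α.lTensor C') ∘ₗ
          (TensorProduct.assoc k C' C' A').toLinearMap)
        ((Coalgebra.comul (R := k) (A := C')).rTensor A'),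
      hcompat, ← S11.rT_rT, hCC]
    conv_rhs => rw [hsg]
    simp only [comp_apply]
    conv_rhs => rw [← S11.comm_rl m.α DD, S11.nat_r' m.α, hDD,
      ← S11.lT_lT (m.γ.rTensor C') (Coalgebra.comul (R := k) (A := C')),
      S11.nat_m' m.γ, S11.rT_rT m2 (m.α.rTensor (A ⊗[k] C)),
      S11.rT_rT (m2 ∘ₗ m.α.rTensor (A ⊗[k] C)) (m.γ.lTensor (C' ⊗[k] A')), hmap]
  have claimT2 : measAct m (entwAct E β.act) ∘ₗ L2.rTensor A'
      = L2 ∘ₗ measAct m β.act := by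
    rw [hP, hQ, hL2]
    refine LinearMap.ext fun x => ?_
    simp only [comp_apply, rTensor_comp]
    conv_lhs => rw [S11.sig_push sg (β.act.rTensor C),
      S11.sig_push sg ((TensorProduct.assoc k M A C).symm.toLinearMap),
      S11.theta_push sg,
      S11.nat_m (m.γ.rTensor C'), S11.nat_m (Coalgebra.comul (R := k) (A := C')),
      S11.rT_rT, S11.rT_rT, S11.rT_rT, hT, ← S11.rT_rT,
      ← S11.nat_m' m2',
      S11.lT_lT, S11.lT_lT, S11.lT_lT, S11.lT_lT, S11.lT_lT]
    conv_rhs => rw [S11.lT_lT (m.γ.rTensor C') (Coalgebra.comul (R := k) (A := C')),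
      ← hDD, ← S11.comm_rl β.act DD, S11.nat_r' β.act, ← S11.nat_l' DD, S11.pent1,
      S11.rT_rT, S11.rT_rT, S11.rT_rT, hT2, ← S11.rT_rT,
      ← S11.nat_m' m2,
      S11.lT_lT, S11.lT_lT, S11.lT_lT]
    rw [hK]
  have claim2a : coactMC k C' (M ⊗[k] C) ∘ₗ ρM.ρ.rTensor C'
      = (ρM.ρ.rTensor C').rTensor C' ∘ₗ coactMC k C' M := by
    refine LinearMap.ext fun x => ?_
    simp only [coactMC, comp_apply]
    rw [← S11.comm_rl ρM.ρ (Coalgebra.comul (R := k) (A := C')) x, S11.nat_r' ρM.ρ]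
  have hG : (((TensorProduct.assoc k (A ⊗[k] C) C' C').symm.toLinearMap ∘ₗ
        (Coalgebra.comul (R := k) (A := C')).lTensor (A ⊗[k] C)) ∘ₗ m.γ.rTensor C') ∘ₗ
        (Coalgebra.comul (R := k) (A := C'))
      = ((m.γ.rTensor C').rTensor C' ∘ₗ
          (Coalgebra.comul (R := k) (A := C')).rTensor C') ∘ₗ
          (Coalgebra.comul (R := k) (A := C')) := by
    refine LinearMap.ext fun c => ?_
    simp only [comp_apply]
    rw [← S11.comm_rl m.γ (Coalgebra.comul (R := k) (A := C')), S11.nat_r' m.γ]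
    exact congrArg _ (by simp)
  have claim2b : coactMC k C' (M ⊗[k] C) ∘ₗ L2
      = L2.rTensor C' ∘ₗ coactMC k C' M := by
    rw [hL2]
    refine LinearMap.ext fun x => ?_
    simp only [coactMC, comp_apply, rTensor_comp]
    rw [← S11.comm_rl (β.act.rTensor C) (Coalgebra.comul (R := k) (A := C')),
      ← S11.comm_rl ((TensorProduct.assoc k M A C).symm.toLinearMap)
        (Coalgebra.comul (R := k) (A := C')),
      S11.nat_r' (β.act.rTensor C),
      S11.nat_r' ((TensorProduct.assoc k M A C).symm.toLinearMap),
      ← S11.nat_l' (Coalgebra.comul (R := k) (A := C')),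
      S11.pent1,
      S11.lT_lT, S11.lT_lT, S11.lT_lT,
      ← S11.nat_m' (Coalgebra.comul (R := k) (A := C')),
      ← S11.nat_m' (m.γ.rTensor C'),
      S11.lT_lT, S11.lT_lT, hG]
  refine ⟨?_, ?_⟩
  · rw [hℓ', rTensor_sub]
    refine LinearMap.ext fun x => ?_
    have h1 := LinearMap.congr_fun claimT1 x
    have h2 := LinearMap.congr_fun claimT2 x
    simp only [comp_apply] at h1 h2
    show (measAct m (entwAct E β.act)) ((rTensor C' ρM.ρ).rTensor A' x - L2.rTensor A' x)
      = (rTensor C' ρM.ρ) ((measAct m β.act) x) - L2 ((measAct m β.act) x)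
    rw [map_sub, h1, h2]
  · rw [hℓ']
    refine LinearMap.ext fun x => ?_
    rw [rTensor_sub]
    have h1 := LinearMap.congr_fun claim2a x
    have h2 := LinearMap.congr_fun claim2b x
    simp only [comp_apply] at h1 h2
    show (coactMC k C' (M ⊗[k] C)) ((rTensor C' ρM.ρ) x - L2 x)
      = (rTensor C' ρM.ρ).rTensor C' ((coactMC k C' M) x) - L2.rTensor C' ((coactMC k C' M) x)
    rw [map_sub, h1, h2]
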